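/- Let X be a set and let a, b, g ∈ Equiv.Perm X satisfy g⁻¹ * a * g = b and Supp(b) ⊊ Supp(a) (the support of b is a proper subset of the support of a). Then g has an infinite orbit. -/

import Mathlib

/-- If `g⁻¹ * a * g = b` and the support of `b` is a proper subset of the support of `a`,
then `g` has an infinite orbit. -/
theorem exists_infinite_orbit_of_conj_support_ssubset {X : Type*}
    (a b g : Equiv.Perm X) (hconj : g⁻¹ * a * g = b)
    (hsupp : {x | b x ≠ x} ⊂ {x | a x ≠ x}) :
    ∃ x : X, (Set.range fun d : ℤ => (g ^ d) x).Infinite := by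
  -- b x = x ↔ a (g x) = g x
  have hb : ∀ x : X, b x = x ↔ a (g x) = g x := by
    intro x
    rw [← hconj]
    simp only [Equiv.Perm.mul_apply]
    constructor
    · intro h
      have := congrArg g h
      simpa using this
    · intro h
      simp [h]
  -- complement of supp a is forward invariant under g
  have hinv : ∀ x : X, a x = x → a (g x) = g x := by
    intro x hx
    have hxT : b x = x := by
      by_contra hbx
      exact (hsupp.1 hbx) hx
    exact (hb x).1 hxT
  obtain ⟨x₀, hx₀a, hx₀b⟩ : ∃ x₀, a x₀ ≠ x₀ ∧ b x₀ = x₀ := by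
    obtain ⟨x₀, hx₀a, hx₀b⟩ := Set.exists_of_ssubset hsupp
    exact ⟨x₀, hx₀a, not_not.1 hx₀b⟩
  have key : ∀ n : ℕ, a ((g ^ n) (g x₀)) = (g ^ n) (g x₀) := by
    intro n
    induction n with
    | zero => simpa using (hb x₀).1 hx₀b
    | succ k ih =>
        have := hinv _ ih
        simpa [pow_succ', Equiv.Perm.mul_apply] using this
  have main : ∀ m n : ℕ, m < n → (g ^ (m : ℤ)) x₀ = (g ^ (n : ℤ)) x₀ → False := by
    intro m n hlt hmn
    have h1 : (g ^ ((n : ℤ) - (m : ℤ))) x₀ = x₀ := by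
      have := congrArg (fun y => (g ^ (-(m : ℤ))) y) hmn
      rw [← Equiv.Perm.mul_apply, ← Equiv.Perm.mul_apply, ← zpow_add, ← zpow_add] at this
      simpa [sub_eq_add_neg, add_comm] using this.symm
    obtain ⟨k, hk⟩ : ∃ k : ℕ, (n : ℤ) - (m : ℤ) = (k : ℤ) + 1 := ⟨n - m - 1, by omega⟩
    rw [hk] at h1
    have h2 : (g ^ (k + 1)) x₀ = x₀ := by
      have hc : ((k : ℤ) + 1) = ((k + 1 : ℕ) : ℤ) := by push_cast; ring
      rw [hc, zpow_natCast] at h1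
      exact h1
    have h3 : (g ^ k) (g x₀) = x₀ := by
      rw [← Equiv.Perm.mul_apply, ← pow_succ]; exact h2
    have := key k
    rw [h3] at this
    exact hx₀a this
  refine ⟨x₀, Set.infinite_of_injective_forall_mem
    (f := fun n : ℕ => (g ^ (n : ℤ)) x₀) ?_ fun n => ⟨(n : ℤ), rfl⟩⟩
  intro m n hmn
  by_contra hne
  rcases Nat.lt_or_ge m n with h | h
  · exact main m n h hmn
  · exact main n m (by omega) hmn.symm
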